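/- Let A → M be a Lie algebroid with anchor ρ and bracket [[-,-]], let B ⊂ A be a vector subbundle, and let ∇ be a flat TM-connection on the quotient bundle A/B. Suppose (TM, B, ∇) is an IM foliation of A over TM, i.e.: B is a Lie subalgebroid of A, and the sections X of A whose class X mod B is ∇-flat form a Lie subalgebra of Γ(A) containing Γ(B) as a Lie ideal. Then the formula ∇^{A/B}_X (Y mod B) := ∇_{ρ(Y)}(X mod B) − [[Y,X]] mod B gives a well-defined flat A-connection on A/B. -/

import Mathlib

set_option maxHeartbeats 3200000 in
/-- Let `A → M` be a Lie algebroid (sections `ΓA`, anchor `ρ`, bracket `br`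
over `R = C^∞(M)`, vector fields = derivations of `R`), `B ⊂ A` a subbundle which is a
Lie subalgebroid, and `nabla` a flat `TM`-connection on `A/B` such that the sections `X`
with `X mod B` flat form a Lie subalgebra containing `Γ(B)` as a Lie ideal (an IM
foliation over `TM`; flat classes generate `Γ(A/B)`). Then
`nabla^{A/B}_X (Y mod B) := nabla_{ρY}(X mod B) − [[Y,X]] mod B` is a well-defined flat
`A`-connection on `A/B`. -/
theorem im_foliation_induced_flat_connection
    {R ΓA : Type*} [CommRing R] [Algebra ℝ R]
    [AddCommGroup ΓA] [Module R ΓA]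
    -- Lie algebroid structure
    (ρ : ΓA →ₗ[R] Derivation ℝ R R)
    (br : ΓA → ΓA → ΓA)
    (hbr_add₁ : ∀ X Y Z : ΓA, br (X + Y) Z = br X Z + br Y Z)
    (hbr_add₂ : ∀ X Y Z : ΓA, br X (Y + Z) = br X Y + br X Z)
    (hbr_anti : ∀ X Y : ΓA, br X Y = - br Y X)
    (hbr_jacobi : ∀ X Y Z : ΓA, br X (br Y Z) = br (br X Y) Z + br Y (br X Z))
    (hbr_leib : ∀ (X : ΓA) (f : R) (Y : ΓA), br X (f • Y) = (ρ X) f • Y + f • br X Y)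
    (hanchor : ∀ X Y : ΓA, ρ (br X Y) = ⁅ρ X, ρ Y⁆)
    -- the subbundle B, a Lie subalgebroid
    (B : Submodule R ΓA)
    (hB_sub : ∀ X Y : ΓA, X ∈ B → Y ∈ B → br X Y ∈ B)
    -- flat TM-connection nabla on A/B
    (nabla : Derivation ℝ R R → (ΓA ⧸ B) → (ΓA ⧸ B))
    (hnabla_addZ : ∀ (Z W : Derivation ℝ R R) (q : ΓA ⧸ B), nabla (Z + W) q = nabla Z q + nabla W q)
    (hnabla_smulZ : ∀ (f : R) (Z : Derivation ℝ R R) (q : ΓA ⧸ B), nabla (f • Z) q = f • nabla Z q)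
    (hnabla_addq : ∀ (Z : Derivation ℝ R R) (q q' : ΓA ⧸ B), nabla Z (q + q') = nabla Z q + nabla Z q')
    (hnabla_leib : ∀ (Z : Derivation ℝ R R) (f : R) (q : ΓA ⧸ B),
      nabla Z (f • q) = Z f • q + f • nabla Z q)
    (hnabla_flat : ∀ (Z W : Derivation ℝ R R) (q : ΓA ⧸ B),
      nabla Z (nabla W q) - nabla W (nabla Z q) = nabla ⁅Z, W⁆ q)
    -- IM foliation conditions: flat sections form a Lie subalgebra with Γ(B) as ideal
    (hflat_sub : ∀ X Y : ΓA, (∀ Z, nabla Z (Submodule.Quotient.mk X) = 0) →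
      (∀ Z, nabla Z (Submodule.Quotient.mk Y) = 0) →
      (∀ Z, nabla Z (Submodule.Quotient.mk (br X Y)) = 0))
    (hflat_ideal : ∀ X Y : ΓA, (∀ Z, nabla Z (Submodule.Quotient.mk X) = 0) →
      Y ∈ B → br X Y ∈ B)
    -- Γ(A/B) is generated by flat classes
    (hgen : Submodule.span R
      ((Submodule.Quotient.mk : ΓA → ΓA ⧸ B) ''
        {X : ΓA | ∀ Z, nabla Z (Submodule.Quotient.mk X) = 0}) = ⊤) :
    -- conclusion: nabla^{A/B} is well defined, C^∞(M)-linear in X, a derivation over ρ(X),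
    -- and flat
    ∃ Dc : ΓA → (ΓA ⧸ B) → (ΓA ⧸ B),
      (∀ X Y : ΓA, Dc X (Submodule.Quotient.mk Y)
        = nabla (ρ Y) (Submodule.Quotient.mk X) - Submodule.Quotient.mk (br Y X)) ∧
      (∀ (X X' : ΓA) (q : ΓA ⧸ B), Dc (X + X') q = Dc X q + Dc X' q) ∧
      (∀ (f : R) (X : ΓA) (q : ΓA ⧸ B), Dc (f • X) q = f • Dc X q) ∧
      (∀ (X : ΓA) (q q' : ΓA ⧸ B), Dc X (q + q') = Dc X q + Dc X q') ∧
      (∀ (X : ΓA) (f : R) (q : ΓA ⧸ B), Dc X (f • q) = (ρ X) f • q + f • Dc X q) ∧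
      (∀ (X Y : ΓA) (q : ΓA ⧸ B), Dc X (Dc Y q) - Dc Y (Dc X q) = Dc (br X Y) q) := by
    classical
  -- basic bracket helpers
  have hbr_zero2 : ∀ X : ΓA, br X 0 = 0 := by
    intro X
    have h : br X 0 = br X 0 + br X 0 := by simpa using hbr_add₂ X 0 0
    exact (right_eq_add.mp h)
  have hbr_zero1 : ∀ X : ΓA, br 0 X = 0 := by
    intro X; rw [hbr_anti, hbr_zero2, neg_zero]
  have hbr_neg1 : ∀ Y X : ΓA, br (-Y) X = - br Y X := by
    intro Y X
    have h := hbr_add₁ Y (-Y) X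
    rw [add_neg_cancel, hbr_zero1] at h
    exact (neg_eq_of_add_eq_zero_right h.symm).symm
  have hbr_sub1 : ∀ Y Y' X : ΓA, br (Y - Y') X = br Y X - br Y' X := by
    intro Y Y' X
    rw [sub_eq_add_neg, hbr_add₁, hbr_neg1, ← sub_eq_add_neg]
  -- basic nabla helpers
  have hnabla_zeroZ : ∀ q : ΓA ⧸ B, nabla 0 q = 0 := by
    intro q
    have h := hnabla_smulZ 0 0 q
    simpa using h
  have hnabla_negZ : ∀ (Z : Derivation ℝ R R) (q : ΓA ⧸ B), nabla (-Z) q = - nabla Z q := by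
    intro Z q
    have h := hnabla_smulZ (-1) Z q
    simpa using h
  have hnabla_subZ : ∀ (Z W : Derivation ℝ R R) (q : ΓA ⧸ B),
      nabla (Z - W) q = nabla Z q - nabla W q := by
    intro Z W q
    rw [sub_eq_add_neg, hnabla_addZ, hnabla_negZ, ← sub_eq_add_neg]
  have hnabla_zeroq : ∀ Z : Derivation ℝ R R, nabla Z 0 = 0 := by
    intro Z
    have h : nabla Z 0 = nabla Z 0 + nabla Z 0 := by simpa using hnabla_addq Z 0 0
    exact (right_eq_add.mp h)
  -- covering lemma: a submodule containing all flat sections and B is everything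
  have cover : ∀ S : Submodule R ΓA,
      (∀ X : ΓA, (∀ Z, nabla Z (Submodule.Quotient.mk X) = 0) → X ∈ S) →
      (∀ X ∈ B, X ∈ S) → ∀ X : ΓA, X ∈ S := by
    intro S hF hBS X
    have hspan : Submodule.span R {X : ΓA | ∀ Z, nabla Z (Submodule.Quotient.mk X) = 0} ≤ S :=
      Submodule.span_le.mpr (fun y hy => hF y hy)
    have h1 : (Submodule.Quotient.mk X : ΓA ⧸ B) ∈
        Submodule.map B.mkQ
          (Submodule.span R {X : ΓA | ∀ Z, nabla Z (Submodule.Quotient.mk X) = 0}) := by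
      rw [Submodule.map_span]
      have himg : ⇑B.mkQ '' {X : ΓA | ∀ Z, nabla Z (Submodule.Quotient.mk X) = 0}
          = (Submodule.Quotient.mk : ΓA → ΓA ⧸ B) ''
            {X : ΓA | ∀ Z, nabla Z (Submodule.Quotient.mk X) = 0} := rfl
      rw [himg, hgen]
      exact Submodule.mem_top
    obtain ⟨x, hx, hxX⟩ := h1
    have hmkeq : (Submodule.Quotient.mk x : ΓA ⧸ B) = Submodule.Quotient.mk X := hxX
    have hdiff : x - X ∈ B := (Submodule.Quotient.eq B).mp hmkeq
    have hX : X = x - (x - X) := by abel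
    rw [hX]
    exact S.sub_mem (hspan hx) (hBS _ hdiff)
  -- key well-definedness identity
  have key : ∀ Y : ΓA, Y ∈ B → ∀ X : ΓA,
      nabla (ρ Y) (Submodule.Quotient.mk X) = Submodule.Quotient.mk (br Y X) := by
    intro Y hY
    let S : Submodule R ΓA :=
      { carrier := {X : ΓA |
          nabla (ρ Y) (Submodule.Quotient.mk X) = Submodule.Quotient.mk (br Y X)}
        add_mem' := by
          intro a b ha hb
          simp only [Set.mem_setOf_eq] at ha hb ⊢
          rw [Submodule.Quotient.mk_add, hnabla_addq, ha, hb, ← Submodule.Quotient.mk_add,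
            ← hbr_add₂]
        zero_mem' := by
          simp only [Set.mem_setOf_eq]
          rw [Submodule.Quotient.mk_zero, hnabla_zeroq, hbr_zero2, Submodule.Quotient.mk_zero]
        smul_mem' := by
          intro f a ha
          simp only [Set.mem_setOf_eq] at ha ⊢
          rw [Submodule.Quotient.mk_smul, hnabla_leib, ha, hbr_leib,
            Submodule.Quotient.mk_add, Submodule.Quotient.mk_smul, Submodule.Quotient.mk_smul] }
    intro X
    refine cover S ?_ ?_ X
    · intro X hX
      show nabla (ρ Y) (Submodule.Quotient.mk X) = Submodule.Quotient.mk (br Y X)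
      have h1 : br X Y ∈ B := hflat_ideal X Y hX hY
      have h2 : br Y X ∈ B := by rw [hbr_anti]; exact B.neg_mem h1
      rw [hX (ρ Y)]
      exact ((Submodule.Quotient.mk_eq_zero B).mpr h2).symm
    · intro X hX
      show nabla (ρ Y) (Submodule.Quotient.mk X) = Submodule.Quotient.mk (br Y X)
      have h0 : (Submodule.Quotient.mk X : ΓA ⧸ B) = 0 :=
        (Submodule.Quotient.mk_eq_zero B).mpr hX
      rw [h0, hnabla_zeroq]
      exact ((Submodule.Quotient.mk_eq_zero B).mpr (hB_sub Y X hY hX)).symm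
  -- choose representatives and define the connection
  have hsurj : ∀ q : ΓA ⧸ B, ∃ Y : ΓA, (Submodule.Quotient.mk Y : ΓA ⧸ B) = q :=
    fun q => Submodule.Quotient.mk_surjective B q
  choose rep hrep using hsurj
  have hcongr : ∀ X Y Y' : ΓA, (Submodule.Quotient.mk Y : ΓA ⧸ B) = Submodule.Quotient.mk Y' →
      nabla (ρ Y) (Submodule.Quotient.mk X) - Submodule.Quotient.mk (br Y X)
        = nabla (ρ Y') (Submodule.Quotient.mk X) - Submodule.Quotient.mk (br Y' X) := by
    intro X Y Y' h
    have hmem : Y - Y' ∈ B := (Submodule.Quotient.eq B).mp h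
    have hk := key (Y - Y') hmem X
    rw [map_sub, hnabla_subZ, hbr_sub1, Submodule.Quotient.mk_sub] at hk
    exact sub_eq_sub_iff_sub_eq_sub.mpr hk
  obtain ⟨Dc, hDmk⟩ :
      ∃ Dc : ΓA → (ΓA ⧸ B) → (ΓA ⧸ B), ∀ X Y : ΓA, Dc X (Submodule.Quotient.mk Y)
        = nabla (ρ Y) (Submodule.Quotient.mk X) - Submodule.Quotient.mk (br Y X) :=
    ⟨fun X q => nabla (ρ (rep q)) (Submodule.Quotient.mk X)
        - Submodule.Quotient.mk (br (rep q) X),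
      fun X Y => hcongr X (rep (Submodule.Quotient.mk Y)) Y (hrep _)⟩
  -- (2) additivity in X
  have h2 : ∀ (X X' : ΓA) (q : ΓA ⧸ B), Dc (X + X') q = Dc X q + Dc X' q := by
    intro X X' q
    obtain ⟨Y, rfl⟩ := Submodule.Quotient.mk_surjective B q
    rw [hDmk, hDmk, hDmk, Submodule.Quotient.mk_add, hnabla_addq, hbr_add₂,
      Submodule.Quotient.mk_add]
    abel
  -- (3) R-linearity in X
  have h3 : ∀ (f : R) (X : ΓA) (q : ΓA ⧸ B), Dc (f • X) q = f • Dc X q := by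
    intro f X q
    obtain ⟨Y, rfl⟩ := Submodule.Quotient.mk_surjective B q
    rw [hDmk, hDmk, Submodule.Quotient.mk_smul, hnabla_leib, hbr_leib,
      Submodule.Quotient.mk_add, Submodule.Quotient.mk_smul, Submodule.Quotient.mk_smul,
      smul_sub]
    abel
  -- (4) additivity in q
  have h4 : ∀ (X : ΓA) (q q' : ΓA ⧸ B), Dc X (q + q') = Dc X q + Dc X q' := by
    intro X q q'
    obtain ⟨Y, rfl⟩ := Submodule.Quotient.mk_surjective B q
    obtain ⟨Y', rfl⟩ := Submodule.Quotient.mk_surjective B q'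
    rw [← Submodule.Quotient.mk_add, hDmk, hDmk, hDmk, map_add, hnabla_addZ, hbr_add₁,
      Submodule.Quotient.mk_add]
    abel
  -- (5) Leibniz rule in q
  have h5 : ∀ (X : ΓA) (f : R) (q : ΓA ⧸ B), Dc X (f • q) = (ρ X) f • q + f • Dc X q := by
    intro X f q
    obtain ⟨Y, rfl⟩ := Submodule.Quotient.mk_surjective B q
    rw [← Submodule.Quotient.mk_smul, hDmk, hDmk, map_smul, hnabla_smulZ]
    have e1 : br (f • Y) X = -((ρ X) f • Y + f • br X Y) := by rw [hbr_anti, hbr_leib]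
    have e2 : (Submodule.Quotient.mk (br X Y) : ΓA ⧸ B)
        = - Submodule.Quotient.mk (br Y X) := by
      rw [hbr_anti X Y, Submodule.Quotient.mk_neg]
    rw [e1, Submodule.Quotient.mk_neg, Submodule.Quotient.mk_add,
      Submodule.Quotient.mk_smul, Submodule.Quotient.mk_smul, e2, smul_sub, smul_neg]
    abel
  -- zero/neg helpers for Dc
  have hD0q : ∀ X : ΓA, Dc X 0 = 0 := by
    intro X
    have h : Dc X 0 = Dc X 0 + Dc X 0 := by simpa using h4 X 0 0
    exact (right_eq_add.mp h)
  have hD0X : ∀ q : ΓA ⧸ B, Dc 0 q = 0 := by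
    intro q
    have h : Dc 0 q = Dc 0 q + Dc 0 q := by simpa using h2 0 0 q
    exact (right_eq_add.mp h)
  have hDnegX : ∀ (X : ΓA) (q : ΓA ⧸ B), Dc (-X) q = - Dc X q := by
    intro X q
    have h := h2 X (-X) q
    rw [add_neg_cancel, hD0X] at h
    exact (neg_eq_of_add_eq_zero_right h.symm).symm
  -- action on flat classes
  have hflat_mk : ∀ X W : ΓA, (∀ Z, nabla Z (Submodule.Quotient.mk X) = 0) →
      Dc X (Submodule.Quotient.mk W) = Submodule.Quotient.mk (br X W) := by
    intro X W hX
    rw [hDmk, hX (ρ W), hbr_anti W X, Submodule.Quotient.mk_neg]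
    simp
  have hBW : ∀ b : ΓA, b ∈ B → ∀ W : ΓA, (∀ Z, nabla Z (Submodule.Quotient.mk W) = 0) →
      Dc b (Submodule.Quotient.mk W) = 0 := by
    intro b hb W hW
    rw [hDmk]
    have e1 : (Submodule.Quotient.mk b : ΓA ⧸ B) = 0 := (Submodule.Quotient.mk_eq_zero B).mpr hb
    have e2 : (Submodule.Quotient.mk (br W b) : ΓA ⧸ B) = 0 :=
      (Submodule.Quotient.mk_eq_zero B).mpr (hflat_ideal W b hW hb)
    rw [e1, hnabla_zeroq, e2, sub_zero]
  -- the curvature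
  obtain ⟨K, hKdef⟩ :
      ∃ K : ΓA → ΓA → (ΓA ⧸ B) → (ΓA ⧸ B), ∀ (X Y : ΓA) (q : ΓA ⧸ B),
        K X Y q = Dc X (Dc Y q) - Dc Y (Dc X q) - Dc (br X Y) q :=
    ⟨fun X Y q => Dc X (Dc Y q) - Dc Y (Dc X q) - Dc (br X Y) q, fun _ _ _ => rfl⟩
  have hK_addX : ∀ (X X' Y : ΓA) (q : ΓA ⧸ B), K (X + X') Y q = K X Y q + K X' Y q := by
    intro X X' Y q
    simp only [hKdef]
    rw [h2 X X' (Dc Y q), h2 X X' q, h4 Y (Dc X q) (Dc X' q), hbr_add₁, h2]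
    abel
  have hK_smulX : ∀ (f : R) (X Y : ΓA) (q : ΓA ⧸ B), K (f • X) Y q = f • K X Y q := by
    intro f X Y q
    simp only [hKdef]
    have e1 : br (f • X) Y = -((ρ Y) f • X + f • br Y X) := by rw [hbr_anti, hbr_leib]
    rw [h3 f X (Dc Y q), h3 f X q, h5 Y f (Dc X q), e1, hDnegX, h2, h3, h3]
    have e2 : Dc (br Y X) q = - Dc (br X Y) q := by
      rw [hbr_anti Y X, hDnegX]
    rw [e2, smul_sub, smul_sub]
    module
  have hK_anti : ∀ (X Y : ΓA) (q : ΓA ⧸ B), K X Y q = - K Y X q := by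
    intro X Y q
    simp only [hKdef]
    rw [hbr_anti X Y, hDnegX]
    abel
  have hK_addY : ∀ (X Y Y' : ΓA) (q : ΓA ⧸ B), K X (Y + Y') q = K X Y q + K X Y' q := by
    intro X Y Y' q
    rw [hK_anti X (Y + Y') q, hK_addX, hK_anti Y X q, hK_anti Y' X q]
    abel
  have hK_smulY : ∀ (f : R) (X Y : ΓA) (q : ΓA ⧸ B), K X (f • Y) q = f • K X Y q := by
    intro f X Y q
    rw [hK_anti X (f • Y) q, hK_smulX, hK_anti Y X q, smul_neg, neg_neg]
  have hK_addq : ∀ (X Y : ΓA) (q q' : ΓA ⧸ B), K X Y (q + q') = K X Y q + K X Y q' := by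
    intro X Y q q'
    simp only [hKdef]
    rw [h4 Y q q', h4 X (Dc Y q) (Dc Y q'), h4 X q q', h4 Y (Dc X q) (Dc X q'),
      h4 (br X Y) q q']
    abel
  have hK_smulq : ∀ (X Y : ΓA) (f : R) (q : ΓA ⧸ B), K X Y (f • q) = f • K X Y q := by
    intro X Y f q
    simp only [hKdef]
    have hanch : (ρ (br X Y)) f = (ρ X) ((ρ Y) f) - (ρ Y) ((ρ X) f) := by
      rw [hanchor, Derivation.commutator_apply]
    rw [h5 Y f q, h4 X, h5 X ((ρ Y) f) q, h5 X f (Dc Y q),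
      h5 X f q, h4 Y, h5 Y ((ρ X) f) q, h5 Y f (Dc X q),
      h5 (br X Y) f q, hanch, sub_smul, smul_sub, smul_sub]
    abel
  -- case computations on flat generators
  have hcase_ff : ∀ X Y W : ΓA, (∀ Z, nabla Z (Submodule.Quotient.mk X) = 0) →
      (∀ Z, nabla Z (Submodule.Quotient.mk Y) = 0) →
      (∀ Z, nabla Z (Submodule.Quotient.mk W) = 0) →
      K X Y (Submodule.Quotient.mk W) = 0 := by
    intro X Y W hX hY hW
    simp only [hKdef]
    have hXY := hflat_sub X Y hX hY
    rw [hflat_mk Y W hY, hflat_mk X (br Y W) hX, hflat_mk X W hX, hflat_mk Y (br X W) hY,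
      hflat_mk (br X Y) W hXY, ← Submodule.Quotient.mk_sub, ← Submodule.Quotient.mk_sub]
    have e : br X (br Y W) - br Y (br X W) - br (br X Y) W = 0 := by
      rw [hbr_jacobi X Y W]; abel
    rw [e, Submodule.Quotient.mk_zero]
  have hcase_fb : ∀ X b W : ΓA, (∀ Z, nabla Z (Submodule.Quotient.mk X) = 0) → b ∈ B →
      (∀ Z, nabla Z (Submodule.Quotient.mk W) = 0) →
      K X b (Submodule.Quotient.mk W) = 0 := by
    intro X b W hX hb hW
    simp only [hKdef]
    have hXW := hflat_sub X W hX hW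
    rw [hBW b hb W hW, hD0q, hflat_mk X W hX, hBW b hb (br X W) hXW,
      hBW (br X b) (hflat_ideal X b hX hb) W hW]
    abel
  have hcase_bb : ∀ b b' W : ΓA, b ∈ B → b' ∈ B →
      (∀ Z, nabla Z (Submodule.Quotient.mk W) = 0) →
      K b b' (Submodule.Quotient.mk W) = 0 := by
    intro b b' W hb hb' hW
    simp only [hKdef]
    rw [hBW b' hb' W hW, hD0q, hBW b hb W hW, hD0q,
      hBW (br b b') (hB_sub b b' hb hb') W hW]
    abel
  have hcase_bf : ∀ b Y W : ΓA, b ∈ B → (∀ Z, nabla Z (Submodule.Quotient.mk Y) = 0) →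
      (∀ Z, nabla Z (Submodule.Quotient.mk W) = 0) →
      K b Y (Submodule.Quotient.mk W) = 0 := by
    intro b Y W hb hY hW
    rw [hK_anti, hcase_fb Y b W hY hb hW, neg_zero]
  -- extend over Y
  have hW1 : ∀ W : ΓA, (∀ Z, nabla Z (Submodule.Quotient.mk W) = 0) →
      ∀ X : ΓA, ((∀ Z, nabla Z (Submodule.Quotient.mk X) = 0) ∨ X ∈ B) →
      ∀ Y : ΓA, K X Y (Submodule.Quotient.mk W) = 0 := by
    intro W hW X hX
    have hK0Y : K X 0 (Submodule.Quotient.mk W) = 0 := by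
      have h := hK_smulY 0 X 0 (Submodule.Quotient.mk W)
      simpa using h
    let S : Submodule R ΓA :=
      { carrier := {Y : ΓA | K X Y (Submodule.Quotient.mk W) = 0}
        add_mem' := by
          intro a b ha hb
          simp only [Set.mem_setOf_eq] at ha hb ⊢
          rw [hK_addY, ha, hb, add_zero]
        zero_mem' := hK0Y
        smul_mem' := by
          intro f a ha
          simp only [Set.mem_setOf_eq] at ha ⊢
          rw [hK_smulY, ha, smul_zero] }
    intro Y
    refine cover S ?_ ?_ Y
    · intro Y hY
      rcases hX with hXf | hXb
      · exact hcase_ff X Y W hXf hY hW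
      · exact hcase_bf X Y W hXb hY hW
    · intro Y hY
      rcases hX with hXf | hXb
      · exact hcase_fb X Y W hXf hY hW
      · exact hcase_bb X Y W hXb hY hW
  -- extend over X
  have hW2 : ∀ W : ΓA, (∀ Z, nabla Z (Submodule.Quotient.mk W) = 0) →
      ∀ X Y : ΓA, K X Y (Submodule.Quotient.mk W) = 0 := by
    intro W hW
    have hK0X : ∀ Y : ΓA, K 0 Y (Submodule.Quotient.mk W) = 0 := by
      intro Y
      have h := hK_smulX 0 0 Y (Submodule.Quotient.mk W)
      simpa using h
    let S : Submodule R ΓA :=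
      { carrier := {X : ΓA | ∀ Y : ΓA, K X Y (Submodule.Quotient.mk W) = 0}
        add_mem' := by
          intro a b ha hb
          simp only [Set.mem_setOf_eq] at ha hb ⊢
          intro Y
          rw [hK_addX, ha, hb, add_zero]
        zero_mem' := hK0X
        smul_mem' := by
          intro f a ha
          simp only [Set.mem_setOf_eq] at ha ⊢
          intro Y
          rw [hK_smulX, ha, smul_zero] }
    intro X
    refine cover S ?_ ?_ X
    · intro X hX
      exact hW1 W hW X (Or.inl hX)
    · intro X hX
      exact hW1 W hW X (Or.inr hX)
  -- extend over q
  have hq : ∀ (X Y : ΓA) (q : ΓA ⧸ B), K X Y q = 0 := by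
    intro X Y q
    have hK0q : K X Y (0 : ΓA ⧸ B) = 0 := by
      have h := hK_smulq X Y 0 0
      simpa using h
    let Sq : Submodule R (ΓA ⧸ B) :=
      { carrier := {q : ΓA ⧸ B | K X Y q = 0}
        add_mem' := by
          intro a b ha hb
          simp only [Set.mem_setOf_eq] at ha hb ⊢
          rw [hK_addq, ha, hb, add_zero]
        zero_mem' := hK0q
        smul_mem' := by
          intro f a ha
          simp only [Set.mem_setOf_eq] at ha ⊢
          rw [hK_smulq, ha, smul_zero] }
    have hle : Submodule.span R
        ((Submodule.Quotient.mk : ΓA → ΓA ⧸ B) ''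
          {X : ΓA | ∀ Z, nabla Z (Submodule.Quotient.mk X) = 0}) ≤ Sq := by
      refine Submodule.span_le.mpr ?_
      rintro _ ⟨W, hW, rfl⟩
      exact hW2 W hW X Y
    have : q ∈ Sq := hle (by rw [hgen]; exact Submodule.mem_top)
    exact this
  have h6 : ∀ (X Y : ΓA) (q : ΓA ⧸ B), Dc X (Dc Y q) - Dc Y (Dc X q) = Dc (br X Y) q := by
    intro X Y q
    have h := hq X Y q
    simp only [hKdef] at h
    exact sub_eq_zero.mp h
  exact ⟨Dc, hDmk, h2, h3, h4, h5, h6⟩
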